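/- arXiv:1902.07548 — 7 statements merged into one kernel-verified Lean document; each statement's English description precedes it below -/
import Mathlib

section
/- Let G be a finite simple graph on n vertices with degree sum d > 0, and let γ₁,…,γₙ be the eigenvalues of ρ_L(G). Then as (q, r) → (1, 1) jointly, through pairs with q > 0, q ≠ 1 and r ≠ 1, the Sharma–Mittal entropy H_{q,r}(G) tends to the von Neumann entropy −Σᵢ₌₁ⁿ γᵢ·ln(γᵢ), where ln is the natural logarithm and terms with γᵢ = 0 are interpreted as 0. -/
open Finset

namespace SMG

open Filter

variable {V : Type*} [Fintype V] [DecidableEq V]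

/-- The degree sum of a graph. -/
def degSum (G : SimpleGraph V) [DecidableRel G.Adj] : ℕ := ∑ v, G.degree v

/-- The Laplacian matrix of a simple graph is Hermitian. -/
lemma lap_isHermitian (G : SimpleGraph V) [DecidableRel G.Adj] :
    (G.lapMatrix ℝ).IsHermitian :=
  (SimpleGraph.posSemidef_lapMatrix ℝ G).isHermitian

/-- The eigenvalues (with multiplicity) of the density matrix `ρ_L(G) = L(G)/d`,
namely `γ v = λ v / d`. -/
noncomputable def lapDensityEigen (G : SimpleGraph V) [DecidableRel G.Adj] : V → ℝ :=
  fun v => (lap_isHermitian G).eigenvalues v / (degSum G : ℝ)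

/-- Sharma–Mittal entropy of a graph based on its (combinatorial) Laplacian:
`H_{q,r}(G) = (1/(1-r)) * ((Σ γᵢ^q)^((1-r)/(1-q)) - 1)` with real powers. -/
noncomputable def lapSM (G : SimpleGraph V) [DecidableRel G.Adj] (q r : ℝ) : ℝ :=
  (1 / (1 - r)) *
    ((∑ v, lapDensityEigen G v ^ q) ^ ((1 - r) / (1 - q)) - 1)




/-- helper: (e^t - 1)/t extended by 1 at 0. -/
noncomputable def Efun (t : ℝ) : ℝ := if t = 0 then 1 else (Real.exp t - 1) / t

lemma continuousAt_Efun : ContinuousAt Efun 0 := by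
  have h1 : Tendsto Efun (nhdsWithin 0 {(0:ℝ)}ᶜ) (nhds 1) := by
    have h := hasDerivAt_iff_tendsto_slope.mp (Real.hasDerivAt_exp 0)
    rw [Real.exp_zero] at h
    refine h.congr' ?_
    filter_upwards [self_mem_nhdsWithin] with t ht
    simp only [Set.mem_compl_iff, Set.mem_singleton_iff] at ht
    simp [Efun, ht, slope_def_field, Real.exp_zero]
  have h2 : Tendsto Efun (pure (0:ℝ)) (nhds 1) := by
    have : Efun 0 = 1 := by simp [Efun]
    simpa [this] using (tendsto_pure_nhds Efun 0)
  have h3 := h1.sup h2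
  rw [nhdsNE_sup_pure] at h3
  rw [ContinuousAt, show Efun 0 = 1 from if_pos rfl]
  exact h3

lemma sum_rpow_pos {γ : V → ℝ} (hγ0 : ∀ v, 0 ≤ γ v) (hγ1 : ∑ v, γ v = 1) {q : ℝ} :
    0 < ∑ v, γ v ^ q := by
  obtain ⟨v0, -, hv0⟩ := Finset.exists_ne_zero_of_sum_ne_zero (by rw [hγ1]; norm_num :
    ∑ v, γ v ≠ 0)
  exact Finset.sum_pos' (fun v _ => Real.rpow_nonneg (hγ0 v) _)
    ⟨v0, Finset.mem_univ v0, Real.rpow_pos_of_pos ((hγ0 v0).lt_of_ne (Ne.symm hv0)) q⟩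

lemma general_tendsto {γ : V → ℝ} (hγ0 : ∀ v, 0 ≤ γ v) (hγ1 : ∑ v, γ v = 1) :
    Tendsto (fun p : ℝ × ℝ => (1 / (1 - p.2)) * ((∑ v, γ v ^ p.1) ^ ((1 - p.2) / (1 - p.1)) - 1))
      (nhdsWithin (1, 1) {p : ℝ × ℝ | 0 < p.1 ∧ p.1 ≠ 1 ∧ p.2 ≠ 1})
      (nhds (-∑ v, γ v * Real.log (γ v))) := by
  set S : ℝ := -∑ v, γ v * Real.log (γ v) with hS
  set f : ℝ → ℝ := fun q => ∑ v, γ v ^ q with hfdef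
  have hf1 : f 1 = 1 := by simp [hfdef, Real.rpow_one, hγ1]
  have hfd : HasDerivAt f (∑ v, γ v * Real.log (γ v)) 1 := by
    apply HasDerivAt.fun_sum
    intro v _
    rcases eq_or_lt_of_le (hγ0 v) with h | h
    · have hz : γ v * Real.log (γ v) = 0 := by rw [← h]; simp
      rw [hz]
      apply (hasDerivAt_const (1:ℝ) (0:ℝ)).congr_of_eventuallyEq
      filter_upwards [eventually_ne_nhds one_ne_zero] with q hq
      rw [← h, Real.zero_rpow hq]
    · simpa [Real.rpow_one, mul_comm] using (Real.hasStrictDerivAt_const_rpow h 1).hasDerivAt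
  have hF : HasDerivAt (fun q => Real.log (f q)) (∑ v, γ v * Real.log (γ v)) 1 := by
    have := hfd.log (by rw [hf1]; norm_num)
    simpa [hf1] using this
  set X : ℝ → ℝ := fun q => Real.log (f q) / (1 - q) with hXdef
  have hX : Tendsto X (nhdsWithin 1 {(1:ℝ)}ᶜ) (nhds S) := by
    have h := (hasDerivAt_iff_tendsto_slope.mp hF).neg
    refine Tendsto.congr ?_ h
    intro q
    have : Real.log (f 1) = 0 := by rw [hf1, Real.log_one]
    rw [slope_def_field, this]
    simp only [hXdef]
    rw [sub_zero, show (1:ℝ) - q = -(q - 1) by ring, div_neg]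
  have hfst : Tendsto (fun p : ℝ × ℝ => p.1)
      (nhdsWithin (1, 1) {p : ℝ × ℝ | 0 < p.1 ∧ p.1 ≠ 1 ∧ p.2 ≠ 1})
      (nhdsWithin 1 {(1:ℝ)}ᶜ) := by
    apply tendsto_nhdsWithin_of_tendsto_nhds_of_eventually_within
    · exact (continuous_fst.tendsto _).mono_left nhdsWithin_le_nhds
    · filter_upwards [self_mem_nhdsWithin] with p hp
      exact hp.2.1
  have hXcomp : Tendsto (fun p : ℝ × ℝ => X p.1)
      (nhdsWithin (1, 1) {p : ℝ × ℝ | 0 < p.1 ∧ p.1 ≠ 1 ∧ p.2 ≠ 1}) (nhds S) :=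
    hX.comp hfst
  have hu : Tendsto (fun p : ℝ × ℝ => 1 - p.2)
      (nhdsWithin (1, 1) {p : ℝ × ℝ | 0 < p.1 ∧ p.1 ≠ 1 ∧ p.2 ≠ 1}) (nhds 0) := by
    have h : Tendsto (fun p : ℝ × ℝ => 1 - p.2) (nhds ((1:ℝ), (1:ℝ))) (nhds 0) := by
      have : Continuous (fun p : ℝ × ℝ => 1 - p.2) := by continuity
      simpa using this.tendsto ((1:ℝ), (1:ℝ))
    exact h.mono_left nhdsWithin_le_nhds
  have hEc : Tendsto (fun p : ℝ × ℝ => Efun ((1 - p.2) * X p.1))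
      (nhdsWithin (1, 1) {p : ℝ × ℝ | 0 < p.1 ∧ p.1 ≠ 1 ∧ p.2 ≠ 1}) (nhds 1) := by
    have hmul := hu.mul hXcomp
    rw [zero_mul] at hmul
    have h4 := continuousAt_Efun.tendsto.comp hmul
    rw [show Efun 0 = 1 from if_pos rfl] at h4
    exact h4
  have hfinal := hXcomp.mul hEc
  rw [mul_one] at hfinal
  refine Tendsto.congr' ?_ hfinal
  filter_upwards [self_mem_nhdsWithin] with p hp
  obtain ⟨hq0, hq1, hr1⟩ := hp
  have hu0 : (1 : ℝ) - p.2 ≠ 0 := sub_ne_zero.mpr (Ne.symm hr1)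
  have hfq : 0 < f p.1 := sum_rpow_pos hγ0 hγ1
  have hpow : f p.1 ^ ((1 - p.2) / (1 - p.1)) =
      Real.exp ((1 - p.2) * X p.1) := by
    rw [Real.rpow_def_of_pos hfq]
    congr 1
    rw [hXdef]
    ring
  by_cases hx : X p.1 = 0
  · simp [hx, hpow, Efun]
    right
    rw [show (∑ v, γ v ^ p.1) = f p.1 from rfl, hpow, hx]
    simp
  · have hux : (1 - p.2) * X p.1 ≠ 0 := mul_ne_zero hu0 hx
    show X p.1 * Efun ((1 - p.2) * X p.1) = _
    rw [Efun, if_neg hux, hpow]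
    field_simp

/-- As `(q,r) → (1,1)` jointly, through pairs with `q > 0`, `q ≠ 1`, `r ≠ 1`, the Sharma–Mittal
entropy `H_{q,r}(G)` tends to the von Neumann entropy `−Σ γᵢ · ln γᵢ`
(with `ln 0 = 0`, so terms with `γᵢ = 0` contribute `0`). -/
theorem lapSM_tendsto_vonNeumann (G : SimpleGraph V) [DecidableRel G.Adj]
    (hd : 0 < degSum G) :
    Filter.Tendsto (fun p : ℝ × ℝ => lapSM G p.1 p.2)
      (nhdsWithin (1, 1) {p : ℝ × ℝ | 0 < p.1 ∧ p.1 ≠ 1 ∧ p.2 ≠ 1})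
      (nhds (-∑ v, lapDensityEigen G v * Real.log (lapDensityEigen G v))) := by
  have hsum_eig : ∑ v, (lap_isHermitian G).eigenvalues v = (G.lapMatrix ℝ).trace := by
    exact (lap_isHermitian G).trace_eq_sum_eigenvalues.symm
  have htr : (G.lapMatrix ℝ).trace = (degSum G : ℝ) := by
    simp [Matrix.trace, SimpleGraph.lapMatrix, Matrix.diag, SimpleGraph.degMatrix, degSum]
  have hdne : (degSum G : ℝ) ≠ 0 := by positivity
  have hγ0 : ∀ v, 0 ≤ lapDensityEigen G v := fun v =>
    div_nonneg ((SimpleGraph.posSemidef_lapMatrix ℝ G).eigenvalues_nonneg v)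
      (Nat.cast_nonneg _)
  have hγ1 : ∑ v, lapDensityEigen G v = 1 := by
    unfold lapDensityEigen
    rw [← Finset.sum_div, hsum_eig, htr, div_self hdne]
  exact general_tendsto hγ0 hγ1

end SMG
end

section
/- Let n ≥ 2 and let Kₙ be the complete graph on n vertices. For real parameters q > 0, q ≠ 1 and r ≠ 1, the Sharma–Mittal entropy of Kₙ based on the Laplacian satisfies H_{q,r}(Kₙ) = (1/(1−r))·[(n−1)^{1−r} − 1]. -/
open Finset

namespace SMG

variable {V : Type*} [Fintype V] [DecidableEq V]

open Matrix

-- trace = sum of eigenvalues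
lemma trace_eq_sum_eigen {m : Type*} [Fintype m] [DecidableEq m] {A : Matrix m m ℝ}
    (hA : A.IsHermitian) : A.trace = ∑ i, hA.eigenvalues i := by
  conv_lhs => rw [hA.spectral_theorem, Unitary.conjStarAlgAut_apply]
  rw [Matrix.trace_mul_cycle]
  have h : (star (hA.eigenvectorUnitary : Matrix m m ℝ)) *
      (hA.eigenvectorUnitary : Matrix m m ℝ) = 1 :=
    (Matrix.mem_unitaryGroup_iff').mp (hA.eigenvectorUnitary).2
  rw [h, Matrix.one_mul, Matrix.trace_diagonal]
  simp

lemma lap_top_eq (n : ℕ) (hn : 2 ≤ n) :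
    (⊤ : SimpleGraph (Fin n)).lapMatrix ℝ = (n : ℝ) • 1 - Matrix.of (fun _ _ => (1:ℝ)) := by
  ext i j
  by_cases h : i = j
  · subst h
    simp [SimpleGraph.lapMatrix, SimpleGraph.degMatrix, Matrix.one_apply, Fintype.card_fin]
    push_cast [Nat.cast_sub (by omega : 1 ≤ n)]
    ring
  · simp [SimpleGraph.lapMatrix, SimpleGraph.degMatrix, Matrix.one_apply, h, Ne.symm h]

lemma lap_top_sq (n : ℕ) (hn : 2 ≤ n) :
    ((⊤ : SimpleGraph (Fin n)).lapMatrix ℝ) * ((⊤ : SimpleGraph (Fin n)).lapMatrix ℝ)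
      = (n : ℝ) • ((⊤ : SimpleGraph (Fin n)).lapMatrix ℝ) := by
  have hJ : (Matrix.of (fun _ _ => (1:ℝ)) : Matrix (Fin n) (Fin n) ℝ) *
      Matrix.of (fun _ _ => (1:ℝ)) = (n : ℝ) • Matrix.of (fun _ _ => (1:ℝ)) := by
    ext i j; simp [Matrix.mul_apply]
  rw [lap_top_eq n hn]
  rw [sub_mul, mul_sub, mul_sub, hJ]
  simp only [smul_mul_assoc, mul_smul_comm, Matrix.one_mul, Matrix.mul_one]
  rw [smul_sub]
  abel


/-- Sharma–Mittal entropy of the complete graph `Kₙ` (`n ≥ 2`) based on the Laplacian: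
`H_{q,r}(Kₙ) = (1/(1−r)) · ((n−1)^{1−r} − 1)`. -/
theorem lapSM_completeGraph (n : ℕ) (hn : 2 ≤ n) (q r : ℝ)
    (hq0 : 0 < q) (hq1 : q ≠ 1) (hr : r ≠ 1) :
    lapSM (⊤ : SimpleGraph (Fin n)) q r =
      (1 / (1 - r)) * (((n : ℝ) - 1) ^ (1 - r) - 1) := by
  set G : SimpleGraph (Fin n) := ⊤
  have hL := lap_isHermitian G
  set e := hL.eigenvalues with he
  -- each eigenvalue is 0 or n
  have hev : ∀ v, e v = 0 ∨ e v = n := by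
    intro v
    have hx := hL.mulVec_eigenvectorBasis v
    have hx2 : (G.lapMatrix ℝ) *ᵥ ((G.lapMatrix ℝ) *ᵥ ⇑(hL.eigenvectorBasis v))
        = (e v * e v) • ⇑(hL.eigenvectorBasis v) := by
      rw [hx, Matrix.mulVec_smul, hx, smul_smul]
    rw [Matrix.mulVec_mulVec, lap_top_sq n hn, Matrix.smul_mulVec, hx, smul_smul] at hx2
    have hne : ⇑(hL.eigenvectorBasis v) ≠ 0 := by
      have := hL.eigenvectorBasis.orthonormal.ne_zero v
      intro hc
      apply this
      ext i
      exact congrFun hc i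
    have : ((n : ℝ) * e v - e v * e v) • ⇑(hL.eigenvectorBasis v) = 0 := by
      rw [sub_smul, hx2, sub_self]
    rcases smul_eq_zero.mp this with h | h
    · have : e v * ((n:ℝ) - e v) = 0 := by ring_nf; linarith [h]
      rcases mul_eq_zero.mp this with h1 | h1
      · exact Or.inl h1
      · exact Or.inr (by linarith)
    · exact absurd h hne
  -- trace
  have hc0 : (0:ℝ) < (n:ℝ) - 1 := by
    have : (2:ℝ) ≤ n := by exact_mod_cast hn
    linarith
  have hn0 : (0:ℝ) < (n:ℝ) := by linarith
  have htr : ∑ v, e v = (n:ℝ) * ((n:ℝ) - 1) := by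
    rw [← trace_eq_sum_eigen hL]
    show (G.lapMatrix ℝ).trace = _
    rw [lap_top_eq n hn]
    simp [Matrix.trace, Matrix.diag, Matrix.one_apply, Finset.sum_sub_distrib]
    ring
  set S : Finset (Fin n) := univ.filter (fun v => e v = n) with hS
  have hsum_split : ∑ v, e v = (S.card : ℝ) * n := by
    rw [← Finset.sum_filter_add_sum_filter_not univ (fun v => e v = n) e]
    have h1 : ∑ v ∈ univ.filter (fun v => e v = n), e v = (S.card : ℝ) * n := by
      rw [Finset.sum_congr rfl (fun v hv => (Finset.mem_filter.mp hv).2)]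
      simp [mul_comm]
      exact Or.inl rfl
    have h2 : ∑ v ∈ univ.filter (fun v => ¬ e v = n), e v = 0 := by
      apply Finset.sum_eq_zero
      intro v hv
      rcases hev v with h | h
      · exact h
      · exact absurd h (Finset.mem_filter.mp hv).2
    rw [h1, h2, add_zero]
  have hcard : (S.card : ℝ) = (n:ℝ) - 1 := by
    have h := hsum_split.symm.trans htr
    exact mul_right_cancel₀ hn0.ne' (by linarith : (S.card:ℝ) * n = ((n:ℝ)-1) * n)
  -- degSum
  have hdeg : (degSum G : ℝ) = (n:ℝ) * ((n:ℝ) - 1) := by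
    have : degSum G = n * (n - 1) := by
      simp [degSum, G, SimpleGraph.complete_graph_degree, Fintype.card_fin]
    rw [this]
    push_cast [Nat.cast_sub (by omega : 1 ≤ n)]
    ring
  -- the entropy sum
  have hkey : ∑ v, lapDensityEigen G v ^ q = ((n:ℝ) - 1) ^ (1 - q) := by
    have hterm : ∀ v, lapDensityEigen G v ^ q
        = if e v = (n:ℝ) then ((((n:ℝ) - 1) ^ q)⁻¹) else 0 := by
      intro v
      unfold lapDensityEigen
      rcases hev v with h | h
      · rw [if_neg (by rw [h]; positivity)]
        show (e v / _) ^ q = 0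
        rw [h, zero_div, Real.zero_rpow hq0.ne']
      · rw [if_pos h]
        show (e v / _) ^ q = _
        rw [h, hdeg, ← Real.inv_rpow hc0.le]
        congr 1
        field_simp
    rw [Finset.sum_congr rfl (fun v _ => hterm v), Finset.sum_ite, Finset.sum_const,
      Finset.sum_const]
    simp only [nsmul_eq_mul, mul_zero, add_zero, smul_zero]
    rw [show (Finset.filter (fun v => e v = (n:ℝ)) univ) = S from rfl, hcard]
    rw [Real.rpow_sub hc0, Real.rpow_one, div_eq_mul_inv]
  unfold lapSM
  rw [hkey, ← Real.rpow_mul hc0.le]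
  have hqe : (1 - q) * ((1 - r) / (1 - q)) = 1 - r := by
    have : (1:ℝ) - q ≠ 0 := by intro h; apply hq1; linarith
    field_simp
  rw [hqe]


end SMG
end

section
/- Let n ≥ 3 and let Cₙ be the cycle graph on n vertices. For real parameters q > 0, q ≠ 1 and r ≠ 1, the Sharma–Mittal entropy of Cₙ based on the Laplacian satisfies H_{q,r}(Cₙ) = (1/(1−r))·[(2/n)^{q(1−r)/(1−q)} · (Σ_{j=0}^{n−1} (sin(πj/n))^{2q})^{(1−r)/(1−q)} − 1]. -/
open Finset

namespace SMG

variable {V : Type*} [Fintype V] [DecidableEq V]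

section Aux
open Polynomial Matrix

variable {m : Type*} [Fintype m] [DecidableEq m] {R : Type*} [CommRing R]

lemma charpoly_units_conj' (P : (Matrix m m R)ˣ) (A : Matrix m m R) :
    ((P : Matrix m m R) * A * (↑P⁻¹ : Matrix m m R)).charpoly = A.charpoly := by
  let Q : (Matrix m m R[X])ˣ := Units.map (RingHom.mapMatrix (C : R →+* R[X])).toMonoidHom P
  have hQ : (Q : Matrix m m R[X]) = (P : Matrix m m R).map C := rfl
  have hQi : (↑Q⁻¹ : Matrix m m R[X]) = (↑P⁻¹ : Matrix m m R).map C := rfl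
  have hcm : charmatrix ((P : Matrix m m R) * A * (↑P⁻¹ : Matrix m m R)) =
      (↑Q : Matrix m m R[X]) * charmatrix A * (↑Q⁻¹ : Matrix m m R[X]) := by
    unfold charmatrix
    rw [mul_sub, sub_mul]
    congr 1
    · rw [← (Matrix.scalar_commute (X : R[X]) (fun r' => Commute.all _ _) (↑Q : Matrix m m R[X])).eq,
        mul_assoc, Q.mul_inv, mul_one]
    · rw [hQ, hQi]
      simp [RingHom.mapMatrix_apply, Matrix.map_mul]
  rw [Matrix.charpoly, hcm, Matrix.det_units_conj, Matrix.charpoly]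

lemma charpoly_diagonal' (d : m → R) :
    (Matrix.diagonal d).charpoly = ∏ i, (X - C (d i)) := by
  have h : charmatrix (Matrix.diagonal d) = Matrix.diagonal fun i => X - C (d i) := by
    ext i j
    by_cases hij : i = j <;> simp [charmatrix_apply, Matrix.diagonal_apply, hij]
  rw [Matrix.charpoly, h, Matrix.det_diagonal]

lemma charpoly_isHermitian (A : Matrix m m ℝ) (hA : A.IsHermitian) :
    A.charpoly = ∏ i, (X - C (hA.eigenvalues i)) := by
  let U := Unitary.toUnits hA.eigenvectorUnitary
  have h1 : (↑U : Matrix m m ℝ) = ↑hA.eigenvectorUnitary := rfl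
  have h2 : (↑U⁻¹ : Matrix m m ℝ) = star (↑hA.eigenvectorUnitary : Matrix m m ℝ) := rfl
  have h : A = (↑U : Matrix m m ℝ) * Matrix.diagonal hA.eigenvalues * (↑U⁻¹ : Matrix m m ℝ) := by
    conv_lhs => rw [hA.spectral_theorem]
    rw [h1, h2]
    norm_num [Function.comp_def]
  rw [congrArg Matrix.charpoly h, charpoly_units_conj', charpoly_diagonal']

lemma sum_comp_eq_of_prod_eq {ι κ : Type*} [Fintype ι] [Fintype κ] (a : ι → ℝ) (b : κ → ℝ)
    (h : ∏ i, (X - C (a i)) = ∏ j, (X - C (b j))) (g : ℝ → ℝ) :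
    ∑ i, g (a i) = ∑ j, g (b j) := by
  have h2 : (Finset.univ.val.map a) = (Finset.univ.val.map b) := by
    have h3 := congrArg Polynomial.roots h
    rwa [Finset.prod_eq_multiset_prod, Finset.prod_eq_multiset_prod,
      show (fun i => X - C (a i)) = (fun x => X - C x) ∘ a from rfl,
      show (fun j => X - C (b j)) = (fun x => X - C x) ∘ b from rfl,
      ← Multiset.map_map (fun x => X - C x) a, ← Multiset.map_map (fun x => X - C x) b,
      Polynomial.roots_multiset_prod_X_sub_C, Polynomial.roots_multiset_prod_X_sub_C] at h3
  calc ∑ i, g (a i) = ((Finset.univ.val.map a).map g).sum := by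
        rw [Multiset.map_map]; exact Finset.sum_eq_multiset_sum _ _
    _ = ((Finset.univ.val.map b).map g).sum := by rw [h2]
    _ = ∑ j, g (b j) := by rw [Multiset.map_map]; exact (Finset.sum_eq_multiset_sum _ _).symm

set_option maxHeartbeats 1600000 in
lemma cycle_charpoly (m : ℕ) :
    ((SimpleGraph.cycleGraph (m+3)).lapMatrix ℝ).charpoly =
      ∏ j : Fin (m+3), (X - C (4 * Real.sin (Real.pi * (j:ℕ) / ((m+3 : ℕ) : ℝ)) ^ 2)) := by
  set n := m + 3 with hn
  have hn0 : (n:ℕ) ≠ 0 := by omega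
  set ω : ℂ := Complex.exp (2 * Real.pi * Complex.I / n) with hω
  have hprim : IsPrimitiveRoot ω n := Complex.isPrimitiveRoot_exp n hn0
  have hω1 : ω ^ n = 1 := hprim.pow_eq_one
  have hωne : ω ≠ 0 := Complex.exp_ne_zero _
  have hmod : ∀ a : ℕ, ω ^ (a % n) = ω ^ a := by
    intro a
    conv_rhs => rw [← Nat.div_add_mod a n]
    rw [pow_add, pow_mul, hω1, one_pow, one_mul]
  set G := SimpleGraph.cycleGraph n with hG
  set L := G.lapMatrix ℝ with hL
  set Lc := L.map (algebraMap ℝ ℂ) with hLc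
  have hdeg : ∀ v : Fin n, G.degree v = 2 := fun v => SimpleGraph.cycleGraph_degree_three_le
  have hLc2 : Lc = (2 : ℂ) • (1 : Matrix (Fin n) (Fin n) ℂ) - G.adjMatrix ℂ := by
    ext i j
    simp only [hLc, Matrix.map_apply, hL, SimpleGraph.lapMatrix, SimpleGraph.degMatrix,
      Matrix.sub_apply, Matrix.smul_apply, Matrix.one_apply, SimpleGraph.adjMatrix_apply,
      Matrix.diagonal_apply]
    by_cases hij : i = j
    · subst hij
      simp [hdeg i]
    · by_cases hadj : G.Adj i j <;> simp [hij, hadj]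
  set F : Matrix (Fin n) (Fin n) ℂ := Matrix.vandermonde (fun i : Fin n => ω ^ (i:ℕ)) with hF
  have hFval : ∀ i j : Fin n, F i j = ω ^ ((i:ℕ) * (j:ℕ)) := by
    intro i j; rw [hF, Matrix.vandermonde_apply, ← pow_mul]
  have hone : ((1 : Fin n) : ℕ) = 1 := Fin.val_one (m+1)
  have hpow : ∀ (a : ℕ) (j : Fin n), ω ^ ((a % n) * (j:ℕ)) = ω ^ (a * (j:ℕ)) := by
    intro a j; rw [pow_mul, pow_mul, hmod]
  have hvaladd : ∀ k : Fin n, ((k + 1 : Fin n) : ℕ) = ((k:ℕ) + 1) % n := by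
    intro k; rw [Fin.val_add, hone]
  have hA : ∀ k j : Fin n, F (k+1) j = ω ^ (j:ℕ) * F k j := by
    intro k j
    rw [hFval, hFval, hvaladd, hpow, add_mul, one_mul, pow_add, mul_comm]
  have hB : ∀ k j : Fin n, F (k-1) j = ω ^ (n - (j:ℕ)) * F k j := by
    intro k j
    have hc : ω ^ (j:ℕ) ≠ 0 := pow_ne_zero _ hωne
    apply mul_right_cancel₀ hc
    have e1 : F (k-1) j * ω ^ (j:ℕ) = F k j := by
      rw [hFval, ← pow_add, ← add_one_mul, ← hpow, ← hvaladd, sub_add_cancel, hFval]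
    have e2 : ω ^ (n - (j:ℕ)) * F k j * ω ^ (j:ℕ) = F k j := by
      rw [mul_right_comm, ← pow_add, Nat.sub_add_cancel (le_of_lt j.isLt), hω1, one_mul]
    rw [e1, e2]
  set ν : Fin n → ℂ := fun j => ((4 * Real.sin (Real.pi * (j:ℕ) / n) ^ 2 : ℝ) : ℂ) with hνdef
  have hν : ∀ j : Fin n, (2:ℂ) - ω ^ (j:ℕ) - ω ^ (n - (j:ℕ)) = ν j := by
    intro j
    set θ : ℝ := 2 * Real.pi * (j:ℕ) / n with hθ
    have h1 : ω ^ (j:ℕ) = Complex.exp ((θ:ℂ) * Complex.I) := by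
      rw [hω, ← Complex.exp_nat_mul]
      congr 1
      have : ((n:ℂ)) ≠ 0 := Nat.cast_ne_zero.mpr hn0
      field_simp [hθ]
      rw [hθ]; push_cast; field_simp
    have h2 : ω ^ (n - (j:ℕ)) = Complex.exp (-(θ:ℂ) * Complex.I) := by
      rw [hω, ← Complex.exp_nat_mul]
      have hjn : ((n - (j:ℕ) : ℕ) : ℂ) = (n:ℂ) - ((j:ℕ):ℂ) := by
        push_cast [Nat.cast_sub (le_of_lt j.isLt)]; ring
      rw [hjn]
      have hcn : ((n:ℂ)) ≠ 0 := Nat.cast_ne_zero.mpr hn0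
      have : ((n:ℂ) - ((j:ℕ):ℂ)) * (2 * Real.pi * Complex.I / n)
          = 2 * Real.pi * Complex.I + (-(θ:ℂ)) * Complex.I := by
        field_simp [hθ]
        rw [hθ]; push_cast; field_simp; ring
      rw [this, Complex.exp_add, Complex.exp_two_pi_mul_I, one_mul]
    rw [h1, h2, Complex.exp_mul_I, Complex.exp_mul_I]
    have hcos : Complex.cos (-(θ:ℂ)) = Complex.cos θ := Complex.cos_neg _
    have hsin : Complex.sin (-(θ:ℂ)) = -Complex.sin θ := Complex.sin_neg _
    rw [hcos, hsin]
    have hreal : (4 * Real.sin (Real.pi * (j:ℕ) / n) ^ 2 : ℝ) = 2 - 2 * Real.cos θ := by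
      have hθ2 : θ = 2 * (Real.pi * (j:ℕ) / n) := by rw [hθ]; ring
      rw [hθ2, Real.cos_two_mul]
      nlinarith [Real.sin_sq_add_cos_sq (Real.pi * (j:ℕ) / n)]
    rw [hνdef]
    simp only [hreal]
    push_cast [Complex.ofReal_cos]
    ring
  have hLF : Lc * F = F * Matrix.diagonal ν := by
    ext k j
    rw [hLc2, Matrix.sub_mul, Matrix.smul_mul, Matrix.one_mul, Matrix.sub_apply,
      Matrix.smul_apply, SimpleGraph.adjMatrix_mul_apply, Matrix.mul_diagonal]
    have hnbr : G.neighborFinset k = {k - 1, k + 1} := SimpleGraph.cycleGraph_neighborFinset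
    have hne : (k - 1 : Fin n) ≠ k + 1 := by
      intro hEq
      have h2 : k = k + (1 + 1) := by
        conv_lhs => rw [← sub_add_cancel k 1, hEq]
        rw [add_assoc]
      have h3 : (1 + 1 : Fin n) = 0 := left_eq_add.mp h2
      have h4 : ((1 + 1 : Fin n) : ℕ) = 0 := by rw [h3]; simp
      rw [Fin.val_add, hone, Nat.mod_eq_of_lt (by omega)] at h4
      omega
    rw [hnbr, Finset.sum_pair hne, hA, hB, ← hν j]
    simp only [smul_eq_mul]
    ring
  have hdet : IsUnit F.det := by
    rw [hF, Matrix.det_vandermonde]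
    refine isUnit_iff_ne_zero.mpr (Finset.prod_ne_zero_iff.mpr ?_)
    intro i _
    refine Finset.prod_ne_zero_iff.mpr fun j hj => sub_ne_zero_of_ne fun hEq => ?_
    exact (Finset.mem_Ioi.mp hj).ne' (Fin.val_injective (hprim.pow_inj j.isLt i.isLt hEq))
  obtain ⟨u, hu⟩ := (Matrix.isUnit_iff_isUnit_det F).mpr hdet
  have hLc3 : Lc = (↑u : Matrix (Fin n) (Fin n) ℂ) * Matrix.diagonal ν * (↑u⁻¹ : Matrix (Fin n) (Fin n) ℂ) := by
    have hstep : Lc * (↑u : Matrix (Fin n) (Fin n) ℂ) = (↑u : Matrix (Fin n) (Fin n) ℂ) * Matrix.diagonal ν := by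
      rw [hu]; exact hLF
    calc Lc = Lc * (↑u : Matrix (Fin n) (Fin n) ℂ) * (↑u⁻¹ : Matrix (Fin n) (Fin n) ℂ) := by
            rw [Units.mul_inv_cancel_right]
      _ = (↑u : Matrix (Fin n) (Fin n) ℂ) * Matrix.diagonal ν * (↑u⁻¹ : Matrix (Fin n) (Fin n) ℂ) := by
            rw [hstep]
  have hcp : Lc.charpoly = ∏ j : Fin n, (X - C (ν j)) := by
    rw [congrArg Matrix.charpoly hLc3, charpoly_units_conj', charpoly_diagonal']
  have hmap : L.charpoly.map (algebraMap ℝ ℂ)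
      = (∏ j : Fin n, (X - C (4 * Real.sin (Real.pi * (j:ℕ) / n) ^ 2))).map (algebraMap ℝ ℂ) := by
    rw [← Matrix.charpoly_map, ← hLc, hcp, Polynomial.map_prod]
    refine Finset.prod_congr rfl fun j _ => ?_
    rw [Polynomial.map_sub, Polynomial.map_X, Polynomial.map_C]
    rfl
  exact Polynomial.map_injective _ (algebraMap ℝ ℂ).injective hmap


end Aux

section Main
open Polynomial

private lemma sum_eigen_pow (m : ℕ) (q : ℝ) :
    ∑ v, lapDensityEigen (SimpleGraph.cycleGraph (m+3)) v ^ q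
      = (2 / ((m+3:ℕ):ℝ)) ^ q *
        ∑ j ∈ Finset.range (m+3), Real.sin (Real.pi * j / ((m+3:ℕ):ℝ)) ^ (2*q) := by
  set N : ℝ := ((m+3:ℕ):ℝ) with hN
  have hN0 : (0:ℝ) < N := by rw [hN]; positivity
  have hdeg : (degSum (SimpleGraph.cycleGraph (m+3)) : ℝ) = 2 * N := by
    have : degSum (SimpleGraph.cycleGraph (m+3)) = (m+3) * 2 := by
      unfold degSum
      rw [Finset.sum_congr rfl fun v _ => SimpleGraph.cycleGraph_degree_three_le,
        Finset.sum_const, Finset.card_univ, Fintype.card_fin, smul_eq_mul]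
    rw [this, hN]
    push_cast
    ring
  have hkey := sum_comp_eq_of_prod_eq
    ((lap_isHermitian (SimpleGraph.cycleGraph (m+3))).eigenvalues)
    (fun j : Fin (m+3) => 4 * Real.sin (Real.pi * (j:ℕ) / ((m+3:ℕ):ℝ)) ^ 2)
    (((charpoly_isHermitian _ (lap_isHermitian _)).symm).trans (cycle_charpoly m))
    (fun x => (x / (2*N)) ^ q)
  have hsin : ∀ j : ℕ, j < m + 3 → 0 ≤ Real.sin (Real.pi * j / N) := by
    intro j hj
    apply Real.sin_nonneg_of_nonneg_of_le_pi (by positivity)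
    rw [div_le_iff₀ hN0]
    have hjN : (j:ℝ) ≤ N := by rw [hN]; exact_mod_cast hj.le
    nlinarith [Real.pi_pos]
  have hterm : ∀ j : ℕ, j < m + 3 → (4 * Real.sin (Real.pi * j / N) ^ 2 / (2*N)) ^ q
      = (2/N) ^ q * Real.sin (Real.pi * j / N) ^ (2*q) := by
    intro j hj
    have hs := hsin j hj
    have h1 : 4 * Real.sin (Real.pi * j / N) ^ 2 / (2*N)
        = (2/N) * Real.sin (Real.pi * j / N) ^ 2 := by
      field_simp
      ring
    rw [h1, Real.mul_rpow (by positivity) (by positivity)]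
    congr 1
    rw [show (2:ℝ)*q = ((2:ℕ):ℝ)*q by norm_num, Real.rpow_mul hs, Real.rpow_natCast]
  calc ∑ v, lapDensityEigen (SimpleGraph.cycleGraph (m+3)) v ^ q
      = ∑ v, ((lap_isHermitian (SimpleGraph.cycleGraph (m+3))).eigenvalues v / (2*N)) ^ q := by
        refine Finset.sum_congr rfl fun v _ => ?_
        rw [lapDensityEigen, hdeg]
    _ = ∑ j : Fin (m+3), (4 * Real.sin (Real.pi * (j:ℕ) / N) ^ 2 / (2*N)) ^ q := hkey
    _ = ∑ j ∈ Finset.range (m+3), (4 * Real.sin (Real.pi * j / N) ^ 2 / (2*N)) ^ q :=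
        Fin.sum_univ_eq_sum_range (fun j : ℕ => (4 * Real.sin (Real.pi * j / N) ^ 2 / (2*N)) ^ q) (m+3)
    _ = ∑ j ∈ Finset.range (m+3), (2/N) ^ q * Real.sin (Real.pi * j / N) ^ (2*q) :=
        Finset.sum_congr rfl fun j hj => hterm j (Finset.mem_range.mp hj)
    _ = (2/N) ^ q * ∑ j ∈ Finset.range (m+3), Real.sin (Real.pi * j / N) ^ (2*q) := by
        rw [Finset.mul_sum]

end Main

/-- Sharma–Mittal entropy of the cycle graph `Cₙ` (`n ≥ 3`) based on the Laplacian: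
`H_{q,r}(Cₙ) = (1/(1−r))·[(2/n)^{q(1−r)/(1−q)}·(Σ_{j=0}^{n−1} sin(πj/n)^{2q})^{(1−r)/(1−q)} − 1]`. -/
theorem lapSM_cycleGraph (n : ℕ) (hn : 3 ≤ n) (q r : ℝ)
    (hq0 : 0 < q) (hq1 : q ≠ 1) (hr : r ≠ 1) :
    lapSM (SimpleGraph.cycleGraph n) q r =
      (1 / (1 - r)) *
        (((2 / n : ℝ) ^ (q * (1 - r) / (1 - q))) *
            (∑ j ∈ Finset.range n, Real.sin (Real.pi * j / n) ^ (2 * q)) ^ ((1 - r) / (1 - q))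
          - 1) := by
  obtain ⟨m, rfl⟩ : ∃ m, n = m + 3 := ⟨n - 3, by omega⟩
  have hN0 : (0:ℝ) < ((m+3:ℕ):ℝ) := by positivity
  have hsin : ∀ j : ℕ, j ∈ Finset.range (m+3) →
      (0:ℝ) ≤ Real.sin (Real.pi * j / ((m+3:ℕ):ℝ)) ^ (2*q) := by
    intro j hj
    apply Real.rpow_nonneg
    apply Real.sin_nonneg_of_nonneg_of_le_pi (by positivity)
    rw [div_le_iff₀ hN0]
    have hjN : (j:ℝ) ≤ ((m+3:ℕ):ℝ) := by exact_mod_cast (Finset.mem_range.mp hj).le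
    nlinarith [Real.pi_pos]
  have hT : (0:ℝ) ≤ ∑ j ∈ Finset.range (m+3), Real.sin (Real.pi * j / ((m+3:ℕ):ℝ)) ^ (2*q) :=
    Finset.sum_nonneg hsin
  rw [lapSM, sum_eigen_pow m q,
    Real.mul_rpow (Real.rpow_nonneg (by positivity) q) hT,
    ← Real.rpow_mul (by positivity), mul_div_assoc]

end SMG
end

section
/- Let n ≥ 2 and let Pₙ be the path graph on n vertices. For real parameters q > 0, q ≠ 1 and r ≠ 1, the Sharma–Mittal entropy of Pₙ based on the Laplacian satisfies H_{q,r}(Pₙ) = (1/(1−r))·[(2/(n−1))^{q(1−r)/(1−q)} · (Σ_{j=0}^{n−1} (sin(πj/(2n)))^{2q})^{(1−r)/(1−q)} − 1]. -/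
open Finset

namespace SMG

variable {V : Type*} [Fintype V] [DecidableEq V]

instance (n : ℕ) : DecidableRel (SimpleGraph.pathGraph n).Adj := fun _ _ =>
  decidable_of_iff _ SimpleGraph.pathGraph_adj.symm

section Aux

open SimpleGraph Matrix

/-- Any eigenvalue of a real symmetric matrix occurs among `IsHermitian.eigenvalues`. -/
lemma mem_range_eigenvalues {m : Type*} [Fintype m] [DecidableEq m]
    {A : Matrix m m ℝ} (hA : A.IsHermitian) {μ : ℝ} {v : m → ℝ}
    (hv : v ≠ 0) (h : A *ᵥ v = μ • v) : ∃ i, hA.eigenvalues i = μ := by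
  by_contra hc
  push_neg at hc
  set U : Matrix m m ℝ := (hA.eigenvectorUnitary : Matrix m m ℝ) with hUdef
  have hUs : U * star U = 1 := (Matrix.mem_unitaryGroup_iff).mp hA.eigenvectorUnitary.2
  have hspec : A = U * diagonal (RCLike.ofReal ∘ hA.eigenvalues) * star U := hA.spectral_theorem
  have key : U * diagonal (fun i => hA.eigenvalues i - μ) * star U = A - μ • 1 := by
    have h2 : diagonal (fun i => hA.eigenvalues i - μ)
        = diagonal hA.eigenvalues - μ • (1 : Matrix m m ℝ) := by
      rw [smul_one_eq_diagonal, ← diagonal_sub]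
    rw [h2, mul_sub, sub_mul]
    congr 1
    · exact hspec.symm
    · rw [mul_smul_comm, smul_mul_assoc, mul_one, hUs]
  have hUunit : IsUnit U := ⟨Unitary.toUnits hA.eigenvectorUnitary, rfl⟩
  have hunit : IsUnit (A - μ • 1) := by
    rw [← key]
    refine (hUunit.mul ?_).mul hUunit.star
    rw [isUnit_diagonal]
    exact IsUnit.of_mul_eq_one (fun i => (hA.eigenvalues i - μ)⁻¹)
      (funext fun i => mul_inv_cancel₀ (sub_ne_zero.mpr (hc i)))
  have hinj := Matrix.mulVec_injective_iff_isUnit.mpr hunit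
  apply hv
  have h0 : (A - μ • 1) *ᵥ v = (A - μ • 1) *ᵥ 0 := by
    rw [Matrix.sub_mulVec, Matrix.mulVec_zero, h, smul_mulVec, one_mulVec, sub_self]
  exact hinj h0

lemma sum_comp_eigen {ι : Type*} [Fintype ι] [DecidableEq ι]
    (lam mu : ι → ℝ) (hmu : Function.Injective mu)
    (hex : ∀ j, ∃ i, lam i = mu j) (F : ℝ → ℝ) :
    ∑ i, F (lam i) = ∑ j, F (mu j) := by
  choose h hh using hex
  have hinj : Function.Injective h := by
    intro a b hab
    apply hmu
    rw [← hh a, ← hh b, hab]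
  have hbij : Function.Bijective h :=
    (Fintype.bijective_iff_injective_and_card h).mpr ⟨hinj, rfl⟩
  let e := Equiv.ofBijective h hbij
  calc ∑ i, F (lam i) = ∑ j, F (lam (e j)) := (Equiv.sum_comp e fun i => F (lam i)).symm
    _ = ∑ j, F (mu j) := by
        refine Finset.sum_congr rfl fun j _ => ?_
        simp only [e, Equiv.ofBijective_apply, hh]

lemma path_nbr_sum {n : ℕ} (k : Fin n) {M : Type*} [AddCommMonoid M] (x : ℕ → M) :
    (∑ u : Fin n, if (pathGraph n).Adj k u then x u.val else 0)
      = (if k.val + 1 < n then x (k.val + 1) else 0)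
        + (if 0 < k.val then x (k.val - 1) else 0) := by
  have step : ∀ u : Fin n, (if (pathGraph n).Adj k u then x u.val else 0)
      = (if k.val + 1 = u.val then x u.val else 0)
        + (if u.val + 1 = k.val then x u.val else 0) := by
    intro u
    by_cases h1 : k.val + 1 = u.val <;> by_cases h2 : u.val + 1 = k.val
    · omega
    · simp [pathGraph_adj, h1, h2]
    · simp [pathGraph_adj, h1, h2]
    · simp [pathGraph_adj, h1, h2]
  rw [Finset.sum_congr rfl (fun u _ => step u), Finset.sum_add_distrib]
  congr 1
  · by_cases h : k.val + 1 < n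
    · rw [if_pos h, Finset.sum_eq_single (⟨k.val + 1, h⟩ : Fin n)]
      · simp
      · intro u _ hu
        rw [if_neg]
        intro hc
        exact hu (Fin.ext hc.symm)
      · simp
    · rw [if_neg h, Finset.sum_eq_zero]
      intro u _
      rw [if_neg]
      have := u.isLt
      omega
  · by_cases h : 0 < k.val
    · have hlt : k.val - 1 < n := by have := k.isLt; omega
      rw [if_pos h, Finset.sum_eq_single (⟨k.val - 1, hlt⟩ : Fin n)]
      · simp only [Fin.val_mk]
        rw [if_pos (by omega)]
      · intro u _ hu
        rw [if_neg]
        intro hc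
        apply hu
        apply Fin.ext
        simp only [Fin.val_mk]
        omega
      · simp
    · rw [if_neg h, Finset.sum_eq_zero]
      intro u _
      rw [if_neg]
      omega

lemma path_degree {n : ℕ} (k : Fin n) :
    (pathGraph n).degree k
      = (if k.val + 1 < n then 1 else 0) + (if 0 < k.val then 1 else 0) := by
  rw [SimpleGraph.degree, neighborFinset_eq_filter, Finset.card_filter]
  exact path_nbr_sum k (fun _ => 1)

lemma path_degSum {n : ℕ} :
    (∑ v : Fin n, (pathGraph n).degree v) = 2 * (n - 1) := by
  simp_rw [path_degree]
  rw [Finset.sum_add_distrib]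
  have h1 : (∑ v : Fin n, if v.val + 1 < n then 1 else 0) = n - 1 := by
    rw [Fin.sum_univ_eq_sum_range (fun m => if m + 1 < n then 1 else 0) n,
      ← Finset.card_filter]
    have : (Finset.range n).filter (fun m => m + 1 < n) = Finset.range (n - 1) := by
      ext m; simp [Finset.mem_range]; omega
    rw [this, Finset.card_range]
  have h2 : (∑ v : Fin n, if 0 < v.val then 1 else 0) = n - 1 := by
    rw [Fin.sum_univ_eq_sum_range (fun m => if 0 < m then 1 else 0) n,
      ← Finset.card_filter]
    have : (Finset.range n).filter (fun m => 0 < m) = Finset.Ico 1 n := by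
      ext m; simp [Finset.mem_range, Finset.mem_Ico]; omega
    rw [this, Nat.card_Ico]
  rw [h1, h2]; omega

lemma path_eigen {n : ℕ} (hn : 2 ≤ n) (j : ℕ) :
    ((pathGraph n).lapMatrix ℝ) *ᵥ
        (fun k : Fin n => Real.cos (Real.pi * j / (2 * n) * (2 * (k.val : ℝ) + 1)))
      = (4 * Real.sin (Real.pi * j / (2 * n)) ^ 2) •
        (fun k : Fin n => Real.cos (Real.pi * j / (2 * n) * (2 * (k.val : ℝ) + 1))) := by
  set a := Real.pi * j / (2 * n) with ha
  have hn0 : (n : ℝ) ≠ 0 := by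
    have : (0:ℝ) < n := by exact_mod_cast Nat.lt_of_lt_of_le Nat.zero_lt_two hn
    exact ne_of_gt this
  have T1 : ∀ X : ℝ, Real.cos (X - 2*a) + Real.cos (X + 2*a)
      = 2 * Real.cos X * Real.cos (2*a) := by
    intro X; rw [Real.cos_sub, Real.cos_add]; ring
  have T2 : 4 * Real.sin a ^ 2 = 2 - 2 * Real.cos (2*a) := by
    have h1 := Real.cos_two_mul a
    have h2 := Real.sin_sq_add_cos_sq a
    nlinarith [h1, h2]
  have L : ∀ t : ℝ, Real.cos (a*(2*(t-1)+1)) + Real.cos (a*(2*(t+1)+1))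
      = 2 * Real.cos (a*(2*t+1)) * Real.cos (2*a) := by
    intro t
    have h1 : a*(2*(t-1)+1) = a*(2*t+1) - 2*a := by ring
    have h2 : a*(2*(t+1)+1) = a*(2*t+1) + 2*a := by ring
    rw [h1, h2, T1]
  have T3 : Real.cos (a*(2*((n:ℝ)-1+1)+1)) = Real.cos (a*(2*((n:ℝ)-1)+1)) := by
    have hs : Real.sin (Real.pi * j) = 0 := by
      rw [mul_comm]; exact Real.sin_nat_mul_pi j
    have h1 : a*(2*((n:ℝ)-1+1)+1) = Real.pi * j + a := by
      rw [ha]; field_simp; ring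
    have h2 : a*(2*((n:ℝ)-1)+1) = Real.pi * j - a := by
      rw [ha]; field_simp; ring
    rw [h1, h2, Real.cos_add, Real.cos_sub, hs]; ring
  have B0 : Real.cos (a*(2*((0:ℝ)-1)+1)) = Real.cos (a*(2*(0:ℝ)+1)) := by
    have h1 : a*(2*((0:ℝ)-1)+1) = -(a*(2*(0:ℝ)+1)) := by ring
    rw [h1, Real.cos_neg]
  funext k
  rw [Pi.smul_apply, smul_eq_mul, SimpleGraph.lapMatrix_mulVec_apply,
    neighborFinset_eq_filter, Finset.sum_filter,
    path_nbr_sum k (fun m => Real.cos (a * (2 * (m : ℝ) + 1))), path_degree k]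
  by_cases h1 : k.val + 1 < n <;> by_cases h2 : 0 < k.val
  · -- interior
    rw [if_pos h1, if_pos h2, if_pos h1, if_pos h2]
    push_cast [Nat.cast_sub (by omega : 1 ≤ k.val)]
    linear_combination (-1 : ℝ) * L ((k.val : ℝ)) -
      Real.cos (a*(2*((k.val : ℝ))+1)) * T2
  · -- k = 0
    have hk0 : k.val = 0 := by omega
    rw [if_pos h1, if_neg h2, if_pos h1, if_neg h2]
    simp only [hk0]
    norm_num
    have h3 : a * 3 = 2 * a + a := by ring
    rw [h3, Real.cos_add, Real.cos_two_mul, Real.sin_two_mul]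
    linear_combination (-2 * Real.cos a) * Real.sin_sq_add_cos_sq a
  · -- k = n - 1
    have hk : k.val = n - 1 := by have := k.isLt; omega
    rw [if_neg h1, if_pos h2, if_neg h1, if_pos h2]
    simp only [hk]
    push_cast [Nat.cast_sub (by omega : 1 ≤ n), Nat.cast_sub (by omega : 1 ≤ n - 1)]
    linear_combination (-1 : ℝ) * L ((n:ℝ) - 1) + T3 -
      Real.cos (a*(2*((n:ℝ)-1)+1)) * T2
  · exfalso; have := k.isLt; omega

lemma path_w_ne_zero {n : ℕ} (hn : 2 ≤ n) {j : ℕ} (hj : j < n) :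
    (fun k : Fin n => Real.cos (Real.pi * j / (2 * n) * (2 * (k.val : ℝ) + 1))) ≠ 0 := by
  intro h
  have h0 := congrFun h (⟨0, by omega⟩ : Fin n)
  simp only [Pi.zero_apply] at h0
  have harg : Real.pi * j / (2 * n) * (2 * ((0:ℕ) : ℝ) + 1) = Real.pi * j / (2 * n) := by
    norm_num
  rw [harg] at h0
  have hlt : Real.pi * j / (2 * n) < Real.pi / 2 := by
    have hn0 : (0:ℝ) < n := by exact_mod_cast (by omega : 0 < n)
    rw [div_lt_iff₀ (by positivity)]
    have hjr : (j : ℝ) < n := by exact_mod_cast hj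
    nlinarith [Real.pi_pos]
  have hge : -(Real.pi/2) < Real.pi * j / (2 * n) := by
    have : (0:ℝ) ≤ Real.pi * j / (2 * n) := by positivity
    linarith [Real.pi_pos]
  have := Real.cos_pos_of_mem_Ioo ⟨hge, hlt⟩
  rw [h0] at this
  exact lt_irrefl 0 this

lemma path_mu_inj {n : ℕ} (hn : 2 ≤ n) :
    Function.Injective (fun j : Fin n =>
      4 * Real.sin (Real.pi * j / (2 * n)) ^ 2) := by
  intro j j' h
  simp only at h
  have hn0 : (0:ℝ) < n := by
    have : 0 < n := by omega
    exact_mod_cast this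
  have key : ∀ m : Fin n, Real.pi * m / (2 * n) ∈ Set.Icc (-(Real.pi/2)) (Real.pi/2) := by
    intro m
    constructor
    · have : (0:ℝ) ≤ Real.pi * m / (2 * n) := by positivity
      linarith [Real.pi_pos]
    · rw [div_le_iff₀ (by positivity)]
      have hm : (m.val : ℝ) ≤ n := by exact_mod_cast le_of_lt m.isLt
      nlinarith [Real.pi_pos]
  have hnn : ∀ m : Fin n, 0 ≤ Real.sin (Real.pi * m / (2 * n)) := by
    intro m
    apply Real.sin_nonneg_of_nonneg_of_le_pi
    · positivity
    · have := (key m).2; linarith [Real.pi_pos]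
  have hs : Real.sin (Real.pi * j / (2 * n)) = Real.sin (Real.pi * j' / (2 * n)) := by
    nlinarith [hnn j, hnn j', h]
  have harg := Real.injOn_sin (key j) (key j') hs
  have : (j.val : ℝ) = j'.val := by
    field_simp at harg
    linarith
  exact Fin.ext (by exact_mod_cast this)

lemma path_sin_nonneg {n : ℕ} (hn : 0 < n) {j : ℕ} (hj : j < n) :
    0 ≤ Real.sin (Real.pi * j / (2 * n)) := by
  have hn0 : (0:ℝ) < n := by exact_mod_cast hn
  apply Real.sin_nonneg_of_nonneg_of_le_pi
  · positivity
  · rw [div_le_iff₀ (by positivity)]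
    have hjr : (j : ℝ) ≤ n := by exact_mod_cast le_of_lt hj
    nlinarith [Real.pi_pos]

end Aux

/-- Sharma–Mittal entropy of the path graph `Pₙ` (`n ≥ 2`) based on the Laplacian:
`H_{q,r}(Pₙ) = (1/(1−r))·[(2/(n−1))^{q(1−r)/(1−q)}·(Σ_{j=0}^{n−1} sin(πj/(2n))^{2q})^{(1−r)/(1−q)} − 1]`. -/
theorem lapSM_pathGraph (n : ℕ) (hn : 2 ≤ n) (q r : ℝ)
    (hq0 : 0 < q) (hq1 : q ≠ 1) (hr : r ≠ 1) :
    lapSM (SimpleGraph.pathGraph n) q r =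
      (1 / (1 - r)) *
        (((2 / ((n : ℝ) - 1)) ^ (q * (1 - r) / (1 - q))) *
            (∑ j ∈ Finset.range n, Real.sin (Real.pi * j / (2 * n)) ^ (2 * q)) ^ ((1 - r) / (1 - q))
          - 1) := by
  have hn0 : (0:ℝ) < n := by exact_mod_cast (by omega : 0 < n)
  have hn1 : (1:ℝ) ≤ (n:ℝ) := by exact_mod_cast (by omega : 1 ≤ n)
  have hd : ((degSum (SimpleGraph.pathGraph n) : ℝ)) = 2 * ((n:ℝ) - 1) := by
    rw [degSum, path_degSum]
    push_cast [Nat.cast_sub (by omega : 1 ≤ n)]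
    ring
  have hC : (0:ℝ) ≤ 2 / ((n:ℝ) - 1) := by
    have : (0:ℝ) ≤ (n:ℝ) - 1 := by linarith
    positivity
  have hdne : (2 : ℝ) * ((n:ℝ) - 1) ≠ 0 := by
    have : (2:ℝ) ≤ (n:ℝ) := by exact_mod_cast hn
    intro hcon; nlinarith
  -- the sum of eigenvalue powers
  have hsum : (∑ v, lapDensityEigen (SimpleGraph.pathGraph n) v ^ q)
      = (2 / ((n:ℝ) - 1)) ^ q *
        ∑ j ∈ Finset.range n, Real.sin (Real.pi * j / (2 * n)) ^ (2 * q) := by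
    unfold lapDensityEigen
    have h1 : (∑ v, ((lap_isHermitian (SimpleGraph.pathGraph n)).eigenvalues v
          / (degSum (SimpleGraph.pathGraph n) : ℝ)) ^ q)
        = ∑ j : Fin n, ((4 * Real.sin (Real.pi * j / (2 * n)) ^ 2)
          / (degSum (SimpleGraph.pathGraph n) : ℝ)) ^ q := by
      exact sum_comp_eigen _ _ (path_mu_inj hn)
        (fun j => mem_range_eigenvalues _ (path_w_ne_zero hn j.isLt) (path_eigen hn j.val))
        (fun t => (t / (degSum (SimpleGraph.pathGraph n) : ℝ)) ^ q)
    rw [h1]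
    have h2 : ∀ j : Fin n, ((4 * Real.sin (Real.pi * j / (2 * n)) ^ 2)
          / (degSum (SimpleGraph.pathGraph n) : ℝ)) ^ q
        = (2 / ((n:ℝ) - 1)) ^ q * Real.sin (Real.pi * j / (2 * n)) ^ (2 * q) := by
      intro j
      have hsj : 0 ≤ Real.sin (Real.pi * j / (2 * n)) := path_sin_nonneg (by omega) j.isLt
      have e1 : (4 * Real.sin (Real.pi * j / (2 * n)) ^ 2)
          / (degSum (SimpleGraph.pathGraph n) : ℝ)
          = (2 / ((n:ℝ) - 1)) * Real.sin (Real.pi * j / (2 * n)) ^ 2 := by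
        have hne1 : (n:ℝ) - 1 ≠ 0 := by
          have : (2:ℝ) ≤ (n:ℝ) := by exact_mod_cast hn
          intro hcon; nlinarith
        rw [hd]
        field_simp
        ring
      rw [e1, Real.mul_rpow hC (by positivity)]
      congr 1
      rw [← Real.rpow_natCast (Real.sin (Real.pi * j / (2 * n))) 2, ← Real.rpow_mul hsj]
      norm_num
    rw [Finset.sum_congr rfl (fun j _ => h2 j), ← Finset.mul_sum]
    congr 1
    exact Fin.sum_univ_eq_sum_range
      (fun m => Real.sin (Real.pi * m / (2 * n)) ^ (2 * q)) n
  have hS : 0 ≤ ∑ j ∈ Finset.range n, Real.sin (Real.pi * j / (2 * n)) ^ (2 * q) := by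
    apply Finset.sum_nonneg
    intro j hj
    exact Real.rpow_nonneg (path_sin_nonneg (by omega) (Finset.mem_range.mp hj)) _
  unfold lapSM
  rw [hsum, Real.mul_rpow (Real.rpow_nonneg hC q) hS, ← Real.rpow_mul hC,
    mul_div_assoc]

end SMG
end

section
/- Let n ≥ 2 and let Kₙ be the complete graph on n vertices. For real parameters q > 0, q ≠ 1 and r ≠ 1, the Sharma–Mittal entropy of Kₙ based on the signless Laplacian satisfies H_{q,r}(Kₙ) = (1/(1−r))·[(((n−2)/n)^q·(n−1)^{1−q} + (2/n)^q)^{(1−r)/(1−q)} − 1]. -/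
open Finset

namespace SMG

variable {V : Type*} [Fintype V] [DecidableEq V]

/-- The signless Laplacian matrix `Q(G) = D(G) + A(G)` of a simple graph. -/
def signlessLapMatrix (G : SimpleGraph V) [DecidableRel G.Adj] : Matrix V V ℝ :=
  G.degMatrix ℝ + G.adjMatrix ℝ

/-- The signless Laplacian matrix of a simple graph is Hermitian. -/
lemma signlessLap_isHermitian (G : SimpleGraph V) [DecidableRel G.Adj] :
    (signlessLapMatrix G).IsHermitian := by
  refine Matrix.IsHermitian.add ?_ ?_
  · exact Matrix.isHermitian_diagonal _
  · rw [Matrix.IsHermitian, Matrix.conjTranspose_eq_transpose_of_trivial]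
    exact G.isSymm_adjMatrix

/-- The eigenvalues (with multiplicity) of the density matrix `ρ_Q(G) = Q(G)/d`,
namely `γ v = μ v / d`. -/
noncomputable def signlessLapDensityEigen (G : SimpleGraph V) [DecidableRel G.Adj] : V → ℝ :=
  fun v => (signlessLap_isHermitian G).eigenvalues v / (degSum G : ℝ)

/-- Sharma–Mittal entropy of a graph based on its signless Laplacian:
`H_{q,r}(G) = (1/(1-r)) * ((Σ γᵢ^q)^((1-r)/(1-q)) - 1)` with real powers. -/
noncomputable def signlessLapSM (G : SimpleGraph V) [DecidableRel G.Adj] (q r : ℝ) : ℝ :=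
  (1 / (1 - r)) *
    ((∑ v, signlessLapDensityEigen G v ^ q) ^ ((1 - r) / (1 - q)) - 1)

lemma sum_eigenvalues_eq_trace {m : Type*} [Fintype m] [DecidableEq m]
    {A : Matrix m m ℝ} (hA : A.IsHermitian) :
    ∑ i, hA.eigenvalues i = A.trace := by
  conv_rhs => rw [hA.spectral_theorem]
  rw [Unitary.conjStarAlgAut_apply, Matrix.trace_mul_cycle,
    show (star (hA.eigenvectorUnitary : Matrix m m ℝ)) * (hA.eigenvectorUnitary : Matrix m m ℝ) = 1
      from Unitary.coe_star_mul_self _, one_mul, Matrix.trace_diagonal]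
  simp [Function.comp]

open Matrix

/-- Sharma–Mittal entropy of the complete graph `Kₙ` (`n ≥ 2`) based on the signless Laplacian:
`H_{q,r}(Kₙ) = (1/(1−r))·[(((n−2)/n)^q·(n−1)^{1−q} + (2/n)^q)^{(1−r)/(1−q)} − 1]`. -/
theorem signlessLapSM_completeGraph (n : ℕ) (hn : 2 ≤ n) (q r : ℝ)
    (hq0 : 0 < q) (hq1 : q ≠ 1) (hr : r ≠ 1) :
    signlessLapSM (⊤ : SimpleGraph (Fin n)) q r =
      (1 / (1 - r)) *
        (((((n : ℝ) - 2) / n) ^ q * ((n : ℝ) - 1) ^ (1 - q) + (2 / n : ℝ) ^ q)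
            ^ ((1 - r) / (1 - q)) - 1) := by
  classical
  have hn1 : (1:ℝ) ≤ (n:ℝ) := by exact_mod_cast Nat.one_le_of_lt hn
  have hn2 : (2:ℝ) ≤ (n:ℝ) := by exact_mod_cast hn
  have hnpos : (0:ℝ) < n := by linarith
  have hn1pos : (0:ℝ) < (n:ℝ) - 1 := by linarith
  set G := (⊤ : SimpleGraph (Fin n)) with hG
  set M := signlessLapMatrix G with hMdef
  have hM := signlessLap_isHermitian G
  set μ := hM.eigenvalues with hμdef
  -- entries of M
  have hMentry : ∀ i j : Fin n, M i j = if i = j then (n:ℝ) - 1 else 1 := by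
    intro i j
    simp only [hMdef, signlessLapMatrix, Matrix.add_apply, SimpleGraph.degMatrix,
      Matrix.diagonal_apply, SimpleGraph.adjMatrix_apply]
    have hdeg : G.degree i = n - 1 := by
      exact (SimpleGraph.complete_graph_degree (V := Fin n) i).trans (by rw [Fintype.card_fin])
    by_cases h : i = j
    · subst h
      simp [hdeg, Nat.cast_sub (Nat.one_le_of_lt hn)]
    · have : G.Adj i j := by simpa [hG] using h
      simp [h, this]
  set a : ℝ := (n:ℝ) - 2 with ha
  set b : ℝ := 2 * (n:ℝ) - 2 with hb
  -- all-ones structure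
  have hA1 : ∀ i j : Fin n, (M - a • (1 : Matrix (Fin n) (Fin n) ℝ)) i j = 1 := by
    intro i j
    simp only [Matrix.sub_apply, Matrix.smul_apply, Matrix.one_apply, hMentry, smul_eq_mul]
    by_cases h : i = j <;> simp [h, ha] <;> ring
  -- matrix quadratic identity
  have hquad : (M - a • (1 : Matrix (Fin n) (Fin n) ℝ)) *
      (M - b • (1 : Matrix (Fin n) (Fin n) ℝ)) = 0 := by
    have hb' : M - b • (1 : Matrix (Fin n) (Fin n) ℝ)
        = (M - a • 1) - (n:ℝ) • (1 : Matrix (Fin n) (Fin n) ℝ) := by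
      rw [sub_sub, ← add_smul]
      congr 1
      rw [ha, hb]; ring_nf
    ext i j
    rw [hb', Matrix.mul_apply]
    simp only [Matrix.sub_apply, hA1, Matrix.smul_apply, Matrix.one_apply, smul_eq_mul,
      mul_sub, one_mul, Matrix.zero_apply]
    rw [Finset.sum_sub_distrib]
    simp [Finset.sum_ite_eq' Finset.univ j, mul_comm]
  -- dichotomy for eigenvalues
  have hdich : ∀ v : Fin n, μ v = a ∨ μ v = b := by
    intro v
    have hx : M *ᵥ ⇑(hM.eigenvectorBasis v) = μ v • ⇑(hM.eigenvectorBasis v) :=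
      hM.mulVec_eigenvectorBasis v
    have hx0 : ⇑(hM.eigenvectorBasis v) ≠ 0 := by
      have := hM.eigenvectorBasis.orthonormal.ne_zero v
      intro h; apply this; ext i; exact congrFun h i
    have h1 : (M - b • (1 : Matrix (Fin n) (Fin n) ℝ)) *ᵥ ⇑(hM.eigenvectorBasis v)
        = (μ v - b) • ⇑(hM.eigenvectorBasis v) := by
      rw [Matrix.sub_mulVec, hx, Matrix.smul_mulVec, Matrix.one_mulVec]
      exact (sub_smul _ _ _).symm
    have h2 : ((M - a • (1 : Matrix (Fin n) (Fin n) ℝ)) *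
        (M - b • (1 : Matrix (Fin n) (Fin n) ℝ))) *ᵥ ⇑(hM.eigenvectorBasis v)
        = ((μ v - a) * (μ v - b)) • ⇑(hM.eigenvectorBasis v) := by
      rw [← Matrix.mulVec_mulVec, h1, Matrix.mulVec_smul, Matrix.sub_mulVec, hx,
        Matrix.smul_mulVec, Matrix.one_mulVec]
      rw [show μ v • ⇑(hM.eigenvectorBasis v) - a • ⇑(hM.eigenvectorBasis v)
          = (μ v - a) • ⇑(hM.eigenvectorBasis v) from (sub_smul _ _ _).symm,
        smul_smul, mul_comm]
    rw [hquad, Matrix.zero_mulVec] at h2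
    have h3 : (μ v - a) * (μ v - b) = 0 := by
      by_contra h
      exact hx0 (by rw [← inv_smul_smul₀ h ⇑(hM.eigenvectorBasis v), ← h2, smul_zero])
    rcases mul_eq_zero.mp h3 with h | h
    · left; linarith [sub_eq_zero.mp h]
    · right; linarith [sub_eq_zero.mp h]
  -- trace
  have htrace : ∑ v, μ v = (n:ℝ) * ((n:ℝ) - 1) := by
    rw [hμdef, sum_eigenvalues_eq_trace hM, Matrix.trace]
    rw [show ∑ i, (signlessLapMatrix G).diag i = ∑ i : Fin n, ((n:ℝ) - 1) from
      Finset.sum_congr rfl (fun i _ => by rw [Matrix.diag_apply, ← hMdef, hMentry, if_pos rfl])]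
    rw [Finset.sum_const, Finset.card_univ, Fintype.card_fin, nsmul_eq_mul]
  -- counting
  set S := Finset.univ.filter (fun v : Fin n => μ v = b) with hS
  have hSc : ∀ v ∈ Finset.univ.filter (fun v : Fin n => ¬ μ v = b), μ v = a := by
    intro v hv
    rcases hdich v with h | h
    · exact h
    · exact absurd h (Finset.mem_filter.mp hv).2
  have hcardsum : S.card + (Finset.univ.filter (fun v : Fin n => ¬ μ v = b)).card = n := by
    rw [hS, Finset.card_filter_add_card_filter_not, Finset.card_univ, Fintype.card_fin]
  have hsum_split : ∑ v, μ v = S.card * b +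
      (Finset.univ.filter (fun v : Fin n => ¬ μ v = b)).card * a := by
    rw [← Finset.sum_filter_add_sum_filter_not Finset.univ (fun v => μ v = b)]
    congr 1
    · rw [Finset.sum_congr rfl (fun v hv => (Finset.mem_filter.mp hv).2),
        Finset.sum_const, nsmul_eq_mul]
    · rw [Finset.sum_congr rfl hSc, Finset.sum_const, nsmul_eq_mul]
  have hScard : S.card = 1 := by
    have hc : ((Finset.univ.filter (fun v : Fin n => ¬ μ v = b)).card : ℝ)
        = (n:ℝ) - S.card := by
      have := hcardsum
      have : ((S.card : ℝ) + (Finset.univ.filter (fun v : Fin n => ¬ μ v = b)).card) = (n:ℝ) := by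
        exact_mod_cast congrArg (Nat.cast : ℕ → ℝ) this
      linarith
    rw [htrace, hc] at hsum_split
    have : (S.card : ℝ) = 1 := by
      rw [ha, hb] at hsum_split
      have hk : (S.card : ℝ) * n = 1 * n := by
        rw [one_mul]; linear_combination -hsum_split
      exact mul_right_cancel₀ (ne_of_gt hnpos) hk
    exact_mod_cast this
  -- degree sum
  have hdeg : (degSum G : ℝ) = (n:ℝ) * ((n:ℝ) - 1) := by
    have h : degSum G = n * (n - 1) := by
      unfold degSum
      rw [Finset.sum_congr rfl (fun v _ => (SimpleGraph.complete_graph_degree (V := Fin n) v).trans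
        (by rw [Fintype.card_fin])), Finset.sum_const, Finset.card_univ, Fintype.card_fin,
        smul_eq_mul]
    rw [h]
    push_cast [Nat.cast_sub (Nat.one_le_of_lt hn)]
    ring
  set d : ℝ := (n:ℝ) * ((n:ℝ) - 1) with hd
  have hdne : d ≠ 0 := by positivity
  -- compute the q-sum
  have hsumq : ∑ v, signlessLapDensityEigen G v ^ q
      = (((n:ℝ) - 2) / n) ^ q * ((n:ℝ) - 1) ^ (1 - q) + (2 / n : ℝ) ^ q := by
    have hterm : ∀ v : Fin n, signlessLapDensityEigen G v ^ q = (μ v / d) ^ q := by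
      intro v
      rw [signlessLapDensityEigen, hdeg]
    rw [Finset.sum_congr rfl (fun v _ => hterm v),
      ← Finset.sum_filter_add_sum_filter_not Finset.univ (fun v => μ v = b)]
    have h1 : ∑ v ∈ Finset.univ.filter (fun v : Fin n => μ v = b), (μ v / d) ^ q
        = (2 / n : ℝ) ^ q := by
      rw [Finset.sum_congr rfl (fun v hv => by rw [(Finset.mem_filter.mp hv).2]),
        Finset.sum_const]
      rw [← hS, hScard, one_nsmul]
      congr 1
      rw [hb, hd]
      field_simp
    have h2 : ∑ v ∈ Finset.univ.filter (fun v : Fin n => ¬ μ v = b), (μ v / d) ^ q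
        = (((n:ℝ) - 2) / n) ^ q * ((n:ℝ) - 1) ^ (1 - q) := by
      rw [Finset.sum_congr rfl (fun v hv => by rw [hSc v hv]), Finset.sum_const]
      have hcard : (Finset.univ.filter (fun v : Fin n => ¬ μ v = b)).card = n - 1 := by
        omega
      rw [hcard, nsmul_eq_mul]
      have hcast : ((n - 1 : ℕ) : ℝ) = (n:ℝ) - 1 := by
        push_cast [Nat.cast_sub (Nat.one_le_of_lt hn)]; ring
      rw [hcast]
      have hbase : a / d = (((n:ℝ) - 2) / n) * (((n:ℝ) - 1))⁻¹ := by
        rw [ha, hd]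
        field_simp
      rw [hbase, Real.mul_rpow (div_nonneg (by linarith) (by linarith))
          (inv_nonneg.mpr (by linarith)),
        Real.inv_rpow hn1pos.le, Real.rpow_sub hn1pos, Real.rpow_one]
      have hq' : ((n:ℝ) - 1) ^ q ≠ 0 := ne_of_gt (Real.rpow_pos_of_pos hn1pos q)
      field_simp
    rw [h1, h2]
    ring
  rw [signlessLapSM, hsumq]

end SMG
end

section
/- Let G be a finite simple graph on n vertices with at least one edge, degree sum d, and let M = max{deg(u) + deg(v) : {u,v} an edge of G}. For real parameters q with 0 < q < 1 and r ≠ 1, the Sharma–Mittal entropy of G based on the Laplacian satisfies H_{q,r}(G) ≤ (1/(1−r))·[(n·(M/d)^q)^{(1−r)/(1−q)} − 1]. -/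
open Finset

namespace SMG

variable {V : Type*} [Fintype V] [DecidableEq V]

/-- Weighted AM-GM style inequality used in the Rayleigh-quotient bound. -/
lemma sq_sub_le_aux (p s a b : ℝ) (hp : 0 < p) (hs : 0 < s) :
    (a - b) ^ 2 ≤ (p + s) / p * a ^ 2 + (p + s) / s * b ^ 2 := by
  rw [← sub_nonneg]
  have h : (p + s) / p * a ^ 2 + (p + s) / s * b ^ 2 - (a - b) ^ 2
      = (s * a + p * b) ^ 2 / (p * s) := by
    field_simp
    ring
  rw [h]
  positivity

/-- Sum of entries squared of a unit eigenvector is 1. -/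
lemma sum_sq_eigenvectorBasis (G : SimpleGraph V) [DecidableRel G.Adj] (i : V) :
    ∑ v, ((lap_isHermitian G).eigenvectorBasis i) v ^ 2 = 1 := by
  have h1 : ‖(lap_isHermitian G).eigenvectorBasis i‖ = 1 :=
    (lap_isHermitian G).eigenvectorBasis.orthonormal.1 i
  have h2 := EuclideanSpace.norm_eq ((lap_isHermitian G).eigenvectorBasis i)
  rw [h1] at h2
  have h3 : (∑ v, ‖((lap_isHermitian G).eigenvectorBasis i) v‖ ^ 2) = 1 := by
    have := congrArg (· ^ 2) h2.symm
    simpa [Real.sq_sqrt (Finset.sum_nonneg fun v _ => sq_nonneg _)] using this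
  rw [← h3]
  exact Finset.sum_congr rfl fun v _ => by rw [Real.norm_eq_abs, sq_abs]

/-- Eigenvalue upper bound: every Laplacian eigenvalue is at most
`M = max {deg u + deg v : {u,v} an edge}`. -/
lemma eigenvalues_le_of_degAdd_le (G : SimpleGraph V) [DecidableRel G.Adj] (M : ℕ)
    (hub : ∀ u v, G.Adj u v → G.degree u + G.degree v ≤ M) (i : V) :
    (lap_isHermitian G).eigenvalues i ≤ (M : ℝ) := by
  have hnorm : ∑ v, (⇑((lap_isHermitian G).eigenvectorBasis i) : V → ℝ) v ^ 2 = 1 :=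
    sum_sq_eigenvectorBasis G i
  have hval : (lap_isHermitian G).eigenvalues i =
      (∑ a : V, ∑ b : V, if G.Adj a b then
        ((⇑((lap_isHermitian G).eigenvectorBasis i) : V → ℝ) a
          - (⇑((lap_isHermitian G).eigenvectorBasis i) : V → ℝ) b) ^ 2 else 0) / 2 := by
    rw [(lap_isHermitian G).eigenvalues_eq i, star_trivial,
      ← Matrix.toLinearMap₂'_apply', SimpleGraph.lapMatrix_toLinearMap₂']
    simp
  set x : V → ℝ := ⇑((lap_isHermitian G).eigenvectorBasis i) with hxdef
  -- bound each double-sum term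
  have key : ∀ a b : V, (if G.Adj a b then (x a - x b) ^ 2 else 0) ≤
      (if G.Adj a b then (M : ℝ) / G.degree a * x a ^ 2 else 0)
      + (if G.Adj a b then (M : ℝ) / G.degree b * x b ^ 2 else 0) := by
    intro a b
    by_cases hab : G.Adj a b
    · simp only [if_pos hab]
      have hda : 0 < (G.degree a : ℝ) := by
        exact_mod_cast G.degree_pos_iff_exists_adj a |>.mpr ⟨b, hab⟩
      have hdb : 0 < (G.degree b : ℝ) := by
        exact_mod_cast G.degree_pos_iff_exists_adj b |>.mpr ⟨a, hab.symm⟩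
      have hM : (G.degree a : ℝ) + G.degree b ≤ M := by exact_mod_cast hub a b hab
      calc (x a - x b) ^ 2
          ≤ ((G.degree a : ℝ) + G.degree b) / G.degree a * x a ^ 2
            + ((G.degree a : ℝ) + G.degree b) / G.degree b * x b ^ 2 :=
            sq_sub_le_aux _ _ _ _ hda hdb
        _ ≤ (M : ℝ) / G.degree a * x a ^ 2 + (M : ℝ) / G.degree b * x b ^ 2 := by
            gcongr
    · simp [hab]
  have hconst : ∀ (a : V) (c : ℝ), (∑ b : V, if G.Adj a b then c else 0)
      = (G.degree a : ℝ) * c := by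
    intro a c
    rw [← Finset.sum_filter, ← SimpleGraph.neighborFinset_eq_filter, Finset.sum_const,
      SimpleGraph.card_neighborFinset_eq_degree, nsmul_eq_mul]
  have hT1 : (∑ a : V, ∑ b : V, if G.Adj a b then (M : ℝ) / G.degree a * x a ^ 2 else 0)
      ≤ M := by
    calc (∑ a : V, ∑ b : V, if G.Adj a b then (M : ℝ) / G.degree a * x a ^ 2 else 0)
        = ∑ a : V, (G.degree a : ℝ) * ((M : ℝ) / G.degree a * x a ^ 2) := by
          exact Finset.sum_congr rfl fun a _ => hconst a _
      _ ≤ ∑ a : V, (M : ℝ) * x a ^ 2 := by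
          refine Finset.sum_le_sum fun a _ => ?_
          rcases Nat.eq_zero_or_pos (G.degree a) with h | h
          · simp [h]; positivity
          · have h' : (0 : ℝ) < G.degree a := by exact_mod_cast h
            rw [← mul_assoc, mul_div_cancel₀ _ h'.ne']
      _ = M := by rw [← Finset.mul_sum, hnorm, mul_one]
  have hT2 : (∑ a : V, ∑ b : V, if G.Adj a b then (M : ℝ) / G.degree b * x b ^ 2 else 0)
      ≤ M := by
    rw [Finset.sum_comm]
    calc (∑ b : V, ∑ a : V, if G.Adj a b then (M : ℝ) / G.degree b * x b ^ 2 else 0)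
        = ∑ b : V, ∑ a : V, if G.Adj b a then (M : ℝ) / G.degree b * x b ^ 2 else 0 := by
          refine Finset.sum_congr rfl fun b _ => Finset.sum_congr rfl fun a _ => ?_
          exact if_congr (G.adj_comm a b) rfl rfl
      _ ≤ M := hT1
  have hS : (∑ a : V, ∑ b : V, if G.Adj a b then (x a - x b) ^ 2 else 0) ≤ 2 * M := by
    calc (∑ a : V, ∑ b : V, if G.Adj a b then (x a - x b) ^ 2 else 0)
        ≤ ∑ a : V, ∑ b : V, ((if G.Adj a b then (M : ℝ) / G.degree a * x a ^ 2 else 0)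
            + (if G.Adj a b then (M : ℝ) / G.degree b * x b ^ 2 else 0)) :=
          Finset.sum_le_sum fun a _ => Finset.sum_le_sum fun b _ => key a b
      _ = (∑ a : V, ∑ b : V, if G.Adj a b then (M : ℝ) / G.degree a * x a ^ 2 else 0)
            + (∑ a : V, ∑ b : V, if G.Adj a b then (M : ℝ) / G.degree b * x b ^ 2 else 0) := by
          simp [Finset.sum_add_distrib]
      _ ≤ 2 * M := by linarith
  rw [hval]
  linarith

/-- The sum of the Laplacian eigenvalues equals the degree sum. -/
lemma sum_eigenvalues_eq_degSum (G : SimpleGraph V) [DecidableRel G.Adj] :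
    ∑ i, (lap_isHermitian G).eigenvalues i = (degSum G : ℝ) := by
  have htr : (G.lapMatrix ℝ).trace = (degSum G : ℝ) := by
    simp only [Matrix.trace, Matrix.diag, SimpleGraph.lapMatrix, Matrix.sub_apply,
      SimpleGraph.degMatrix, Matrix.of_apply, degSum]
    simp [SimpleGraph.adjMatrix, Nat.cast_sum]
  have hA := lap_isHermitian G
  have hspec := hA.spectral_theorem
  have : (G.lapMatrix ℝ).trace
      = (Matrix.diagonal (RCLike.ofReal ∘ hA.eigenvalues) : Matrix V V ℝ).trace := by
    conv_lhs => rw [hspec]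
    rw [Unitary.conjStarAlgAut_apply, Matrix.trace_mul_cycle]
    have hu : (star (hA.eigenvectorUnitary : Matrix V V ℝ))
        * (hA.eigenvectorUnitary : Matrix V V ℝ) = 1 :=
      Unitary.coe_star_mul_self _
    rw [hu, Matrix.one_mul]
  rw [this] at htr
  rw [← htr]
  simp [Matrix.trace_diagonal]

/-- Upper bound on the Sharma–Mittal entropy (Laplacian), for `0 < q < 1`, in terms of
`M = max {deg u + deg v : {u,v} an edge}`:
`H_{q,r}(G) ≤ (1/(1−r))·[(n·(M/d)^q)^{(1−r)/(1−q)} − 1]`. -/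
theorem lapSM_le_of_isGreatest_degAdd (G : SimpleGraph V) [DecidableRel G.Adj]
    (M : ℕ) (hM : IsGreatest {x : ℕ | ∃ u v, G.Adj u v ∧ x = G.degree u + G.degree v} M)
    (q r : ℝ) (hq0 : 0 < q) (hq1 : q < 1) (hr : r ≠ 1) :
    lapSM G q r ≤
      (1 / (1 - r)) *
        (((Fintype.card V : ℝ) * ((M : ℝ) / (degSum G : ℝ)) ^ q) ^ ((1 - r) / (1 - q)) - 1) := by
  obtain ⟨⟨u, v, huv, -⟩, hMub⟩ := hM
  have hub : ∀ u v, G.Adj u v → G.degree u + G.degree v ≤ M := by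
    intro a b hab
    exact hMub ⟨a, b, hab, rfl⟩
  have hd : (0 : ℝ) < (degSum G : ℝ) := by
    have : 0 < degSum G := by
      have h1 : 0 < G.degree u := G.degree_pos_iff_exists_adj u |>.mpr ⟨v, huv⟩
      exact lt_of_lt_of_le h1 (Finset.single_le_sum (f := fun w => G.degree w)
        (fun w _ => Nat.zero_le _) (Finset.mem_univ u))
    exact_mod_cast this
  have heig_nonneg : ∀ i, 0 ≤ (lap_isHermitian G).eigenvalues i := fun i =>
    (SimpleGraph.posSemidef_lapMatrix ℝ G).eigenvalues_nonneg i
  have hγ_nonneg : ∀ i, 0 ≤ lapDensityEigen G i := fun i =>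
    div_nonneg (heig_nonneg i) hd.le
  have hγ_le : ∀ i, lapDensityEigen G i ≤ (M : ℝ) / (degSum G : ℝ) := by
    intro i
    unfold lapDensityEigen
    gcongr
    exact eigenvalues_le_of_degAdd_le G M hub i
  -- positivity of the sum S
  set S : ℝ := ∑ i, lapDensityEigen G i ^ q with hSdef
  have hsum_γ : ∑ i, lapDensityEigen G i = 1 := by
    simp only [lapDensityEigen, ← Finset.sum_div, sum_eigenvalues_eq_degSum]
    exact div_self hd.ne'
  have hex : ∃ i, 0 < lapDensityEigen G i := by
    by_contra h
    push_neg at h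
    have : (∑ i, lapDensityEigen G i) = 0 :=
      le_antisymm (Finset.sum_nonpos fun i _ => h i)
        (Finset.sum_nonneg fun i _ => hγ_nonneg i)
    rw [hsum_γ] at this
    exact one_ne_zero this
  obtain ⟨i₀, hi₀⟩ := hex
  have hS0 : 0 < S := by
    refine Finset.sum_pos' (fun i _ => Real.rpow_nonneg (hγ_nonneg i) q) ⟨i₀, Finset.mem_univ i₀,
      Real.rpow_pos_of_pos hi₀ q⟩
  set B : ℝ := (Fintype.card V : ℝ) * ((M : ℝ) / (degSum G : ℝ)) ^ q with hBdef
  have hSB : S ≤ B := by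
    calc S ≤ ∑ _i : V, ((M : ℝ) / (degSum G : ℝ)) ^ q :=
          Finset.sum_le_sum fun i _ => Real.rpow_le_rpow (hγ_nonneg i) (hγ_le i) hq0.le
      _ = B := by rw [Finset.sum_const, nsmul_eq_mul, hBdef, Finset.card_univ]
  set e : ℝ := (1 - r) / (1 - q) with hedef
  rw [lapSM]
  have h1q : 0 < 1 - q := by linarith
  rcases lt_or_gt_of_ne hr with hr1 | hr1
  · -- r < 1
    have h1r : 0 < 1 - r := by linarith
    have he : 0 ≤ e := le_of_lt (div_pos h1r h1q)
    have : S ^ e ≤ B ^ e := Real.rpow_le_rpow hS0.le hSB he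
    have h := mul_le_mul_of_nonneg_left (sub_le_sub_right this 1)
      (le_of_lt (div_pos one_pos h1r))
    exact h
  · -- r > 1
    have h1r : 1 - r < 0 := by linarith
    have he : e ≤ 0 := le_of_lt (div_neg_of_neg_of_pos h1r h1q)
    have hBS : B ^ e ≤ S ^ e := Real.rpow_le_rpow_of_nonpos hS0 hSB he
    have hcoef : (1 : ℝ) / (1 - r) ≤ 0 := le_of_lt (div_neg_of_pos_of_neg one_pos h1r)
    have h := mul_le_mul_of_nonpos_left (sub_le_sub_right hBS 1) hcoef
    exact h

end SMG
end

section
/- Let G be a k-regular finite simple graph on n vertices with k ≥ 1. For real parameters q with 0 < q < 1 and r ≠ 1, the Sharma–Mittal entropy of G based on the Laplacian satisfies H_{q,r}(G) ≤ (1/(1−r))·[2^{q(1−r)/(1−q)}·n^{1−r} − 1]. -/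
open Finset

namespace SMG

variable {V : Type*} [Fintype V] [DecidableEq V]

open Matrix in
lemma lap_diag (G : SimpleGraph V) [DecidableRel G.Adj] (v : V) :
    G.lapMatrix ℝ v v = G.degree v := by
  simp [SimpleGraph.lapMatrix, SimpleGraph.degMatrix, Matrix.sub_apply]

open Matrix in
lemma lap_eigen_le (G : SimpleGraph V) [DecidableRel G.Adj] (k : ℕ)
    (hreg : G.IsRegularOfDegree k) (i : V) :
    (lap_isHermitian G).eigenvalues i ≤ 2 * k := by
  set hA := lap_isHermitian G with hhA
  have hv : G.lapMatrix ℝ *ᵥ ⇑(hA.eigenvectorBasis i)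
      = hA.eigenvalues i • ⇑(hA.eigenvectorBasis i) := hA.mulVec_eigenvectorBasis i
  have hne : (⇑(hA.eigenvectorBasis i) : V → ℝ) ≠ 0 := by
    have h := hA.eigenvectorBasis.orthonormal.ne_zero i
    exact fun hc => h (by simpa using congrArg (WithLp.toLp 2) hc)
  have hμ : Module.End.HasEigenvalue (Matrix.toLin' (G.lapMatrix ℝ)) (hA.eigenvalues i) := by
    refine Module.End.hasEigenvalue_of_hasEigenvector
      (x := (⇑(hA.eigenvectorBasis i) : V → ℝ)) ⟨Module.End.mem_eigenspace_iff.mpr ?_, hne⟩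
    rw [Matrix.toLin'_apply]; exact hv
  obtain ⟨v, hball⟩ := eigenvalue_mem_ball hμ
  rw [Metric.mem_closedBall, Real.dist_eq] at hball
  have hdiag : G.lapMatrix ℝ v v = (k : ℝ) := by rw [lap_diag, hreg v]
  have hoff : ∑ j ∈ Finset.univ.erase v, ‖G.lapMatrix ℝ v j‖ = (k : ℝ) := by
    have h1 : ∀ j ∈ Finset.univ.erase v, ‖G.lapMatrix ℝ v j‖
        = (if G.Adj v j then (1:ℝ) else 0) := by
      intro j hj
      have hjv : j ≠ v := (Finset.mem_erase.mp hj).1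
      have : G.lapMatrix ℝ v j = -(if G.Adj v j then (1:ℝ) else 0) := by
        simp [SimpleGraph.lapMatrix, SimpleGraph.degMatrix, Matrix.sub_apply,
          Matrix.diagonal_apply_ne _ (Ne.symm hjv)]
      rw [this, norm_neg, Real.norm_eq_abs]
      split <;> simp
    rw [Finset.sum_congr rfl h1, Finset.sum_erase _ (by simp),
      ← SimpleGraph.degree_eq_sum_if_adj, hreg v]
  rw [hdiag, hoff] at hball
  have := (abs_le.mp hball).2
  linarith

lemma lap_exists_pos_eigen (G : SimpleGraph V) [DecidableRel G.Adj] [Nonempty V]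
    (k : ℕ) (hk : 1 ≤ k) (hreg : G.IsRegularOfDegree k) :
    ∃ i, 0 < (lap_isHermitian G).eigenvalues i := by
  set hA := lap_isHermitian G with hhA
  have hAne : G.lapMatrix ℝ ≠ 0 := by
    intro h
    obtain ⟨v⟩ := (inferInstance : Nonempty V)
    have h2 := congrFun (congrFun h v) v
    rw [lap_diag, hreg v, Matrix.zero_apply] at h2
    exact_mod_cast absurd h2 (by positivity)
  have hev : hA.eigenvalues ≠ 0 := by
    contrapose! hAne
    have hsp := hA.spectral_theorem
    rwa [hAne, Pi.comp_zero, RCLike.ofReal_zero,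
      (by rfl : Function.const V (0 : ℝ) = fun _ ↦ 0),
      Matrix.diagonal_zero, map_zero] at hsp
  obtain ⟨i, hi⟩ := Function.ne_iff.mp hev
  exact ⟨i, lt_of_le_of_ne ((SimpleGraph.posSemidef_lapMatrix ℝ G).eigenvalues_nonneg i)
    (Ne.symm hi)⟩

/-- For a `k`-regular graph (`k ≥ 1`) and `0 < q < 1`:
`H_{q,r}(G) ≤ (1/(1−r))·[2^{q(1−r)/(1−q)}·n^{1−r} − 1]`. -/
theorem lapSM_le_of_regular (G : SimpleGraph V) [DecidableRel G.Adj]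
    (k : ℕ) (hk : 1 ≤ k) (hreg : G.IsRegularOfDegree k)
    (q r : ℝ) (hq0 : 0 < q) (hq1 : q < 1) (hr : r ≠ 1) :
    lapSM G q r ≤
      (1 / (1 - r)) *
        ((2 : ℝ) ^ (q * (1 - r) / (1 - q)) * (Fintype.card V : ℝ) ^ (1 - r) - 1) := by
  have hr1 : (1 : ℝ) - r ≠ 0 := sub_ne_zero.mpr (Ne.symm hr)
  have hq1' : (0 : ℝ) < 1 - q := by linarith
  have he0 : (1 - r) / (1 - q) ≠ 0 := div_ne_zero hr1 (ne_of_gt hq1')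
  cases isEmpty_or_nonempty V with
  | inl hV =>
    apply le_of_eq
    have hcard : (Fintype.card V : ℝ) = 0 := by simp
    rw [lapSM, Finset.univ_eq_empty, Finset.sum_empty, Real.zero_rpow he0,
      hcard, Real.zero_rpow hr1, mul_zero]
  | inr hV =>
    set n := Fintype.card V with hn
    have hn0 : 0 < n := Fintype.card_pos
    have hnR : (0 : ℝ) < n := by exact_mod_cast hn0
    have hkR : (0 : ℝ) < k := by exact_mod_cast hk
    have hd : (degSum G : ℝ) = n * k := by
      rw [degSum]
      push_cast
      rw [Finset.sum_congr rfl (fun v _ => by exact_mod_cast congrArg Nat.cast (hreg v)),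
        Finset.sum_const, Finset.card_univ, nsmul_eq_mul]
    have hdpos : (0 : ℝ) < (degSum G : ℝ) := by rw [hd]; positivity
    have hγ0 : ∀ v, 0 ≤ lapDensityEigen G v := fun v =>
      div_nonneg ((SimpleGraph.posSemidef_lapMatrix ℝ G).eigenvalues_nonneg v) hdpos.le
    have hγle : ∀ v, lapDensityEigen G v ≤ 2 / n := by
      intro v
      rw [lapDensityEigen]
      have h1 : (lap_isHermitian G).eigenvalues v ≤ 2 * k := lap_eigen_le G k hreg v
      calc (lap_isHermitian G).eigenvalues v / (degSum G : ℝ)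
          ≤ 2 * k / (degSum G : ℝ) := by gcongr
        _ = 2 / n := by rw [hd]; field_simp
    set S := ∑ v, lapDensityEigen G v ^ q with hS
    set B := (n : ℝ) * (2 / n) ^ q with hB
    have hSpos : 0 < S := by
      obtain ⟨i, hi⟩ := lap_exists_pos_eigen G k hk hreg
      refine Finset.sum_pos' (fun v _ => Real.rpow_nonneg (hγ0 v) q)
        ⟨i, Finset.mem_univ i, Real.rpow_pos_of_pos (div_pos hi hdpos) q⟩
    have hSle : S ≤ B := by
      calc S ≤ ∑ _v : V, (2 / (n:ℝ)) ^ q :=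
            Finset.sum_le_sum fun v _ => Real.rpow_le_rpow (hγ0 v) (hγle v) hq0.le
        _ = B := by rw [Finset.sum_const, Finset.card_univ, nsmul_eq_mul, ← hn]
    have hBpos : 0 < B := by
      rw [hB]; positivity
    have hkey : B ^ ((1 - r) / (1 - q))
        = (2 : ℝ) ^ (q * (1 - r) / (1 - q)) * (n : ℝ) ^ (1 - r) := by
      have hB2 : B = (2 : ℝ) ^ q * (n : ℝ) ^ (1 - q) := by
        rw [hB, Real.div_rpow (by norm_num) hnR.le, Real.rpow_sub hnR, Real.rpow_one]
        field_simp
      rw [hB2, Real.mul_rpow (Real.rpow_nonneg (by norm_num) q) (Real.rpow_nonneg hnR.le _),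
        ← Real.rpow_mul (by norm_num : (0:ℝ) ≤ 2), ← Real.rpow_mul hnR.le,
        mul_div_assoc' q]
      rw [show (1 - q) * ((1 - r) / (1 - q)) = 1 - r by field_simp]
    rw [lapSM, ← hS, ← hkey]
    rcases hr.lt_or_gt with hrlt | hrgt
    · have he : 0 ≤ (1 - r) / (1 - q) := div_nonneg (by linarith) hq1'.le
      have h2 : S ^ ((1 - r) / (1 - q)) ≤ B ^ ((1 - r) / (1 - q)) :=
        Real.rpow_le_rpow hSpos.le hSle he
      have hpos : 0 ≤ 1 / (1 - r) := by
        apply div_nonneg <;> linarith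
      exact mul_le_mul_of_nonneg_left (by linarith) hpos
    · have he : (1 - r) / (1 - q) ≤ 0 :=
        div_nonpos_of_nonpos_of_nonneg (by linarith) hq1'.le
      have h2 : B ^ ((1 - r) / (1 - q)) ≤ S ^ ((1 - r) / (1 - q)) :=
        Real.rpow_le_rpow_of_nonpos hSpos hSle he
      have hneg : 1 / (1 - r) ≤ 0 := by
        apply div_nonpos_of_nonneg_of_nonpos <;> linarith
      exact mul_le_mul_of_nonpos_left (by linarith) hneg

end SMG
end
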